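/- arXiv:2511.21973 — 3 statements merged into one kernel-verified Lean document; each statement's English description precedes it below -/
import Mathlib

section
/- In the matched-pair DID setup with ε_1,…,ε_I mutually independent and P(ε_i = 1) = P(ε_i = 0) = 1/2 for every i, the variance estimator S²(Q) satisfies the exact identity E[S²(Q)] = I⁻² Σ_{i=1}^I ν_i² + I⁻² mᵀ (Id − H_Q) m, where m = (m_1,…,m_I)ᵀ with m_i = μ_i / √(1 − h_{ii}). -/
open MeasureTheory ProbabilityTheory Finset Matrix

/-- **Exact expectation identity for the variance estimator `S²(Q)`.**
In the matched-pair DID setup with `I ≥ 1` pairs, pair-level potential estimator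
values `t1 i, t2 i`, and mutually independent assignments `ε i ∈ {0,1}` with
`P(ε i = 1) = P(ε i = 0) = 1/2`, let `Q` be an `I × L` matrix (`L < I`) with `QᵀQ`
invertible, `H = Q (QᵀQ)⁻¹ Qᵀ` with diagonal entries `H i i < 1`,
`y i = τ̂ i / √(1 - H i i)` and `S²(Q) = I⁻² yᵀ (Id - H) y`.  Then
`E[S²(Q)] = I⁻² ∑ i, ν i² + I⁻² mᵀ (Id - H) m`, where `ν i² = (t1 i - t2 i)²/4`,
`μ i = (t1 i + t2 i)/2`, and `m i = μ i / √(1 - H i i)`. -/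
theorem variance_estimator_expectation
    {Ω : Type*} [MeasurableSpace Ω] (P : Measure Ω) [IsProbabilityMeasure P]
    (I L : ℕ) (hI : 1 ≤ I) (hL : L < I)
    (t1 t2 : Fin I → ℝ)
    (ε : Fin I → Ω → ℝ)
    (hεmeas : ∀ i, Measurable (ε i))
    (hεval : ∀ i ω, ε i ω = 0 ∨ ε i ω = 1)
    (hindep : iIndepFun ε P)
    (hε1 : ∀ i, P {ω | ε i ω = 1} = 1 / 2)
    (hε0 : ∀ i, P {ω | ε i ω = 0} = 1 / 2)
    (Q : Matrix (Fin I) (Fin L) ℝ) (hQ : IsUnit (Qᵀ * Q))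
    (H : Matrix (Fin I) (Fin I) ℝ) (hH : H = Q * (Qᵀ * Q)⁻¹ * Qᵀ)
    (hdiag : ∀ i, H i i < 1) :
    (∫ ω, ((I : ℝ) ^ 2)⁻¹ *
        ((fun i => (ε i ω * t1 i + (1 - ε i ω) * t2 i) / Real.sqrt (1 - H i i)) ⬝ᵥ
          ((1 - H) *ᵥ
            fun i => (ε i ω * t1 i + (1 - ε i ω) * t2 i) / Real.sqrt (1 - H i i))) ∂P)
      = ((I : ℝ) ^ 2)⁻¹ * (∑ i : Fin I, (t1 i - t2 i) ^ 2 / 4)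
        + ((I : ℝ) ^ 2)⁻¹ *
          ((fun i => ((t1 i + t2 i) / 2) / Real.sqrt (1 - H i i)) ⬝ᵥ
            ((1 - H) *ᵥ fun i => ((t1 i + t2 i) / 2) / Real.sqrt (1 - H i i))) := by
  have hpos : ∀ i, (0:ℝ) < 1 - H i i := fun i => by linarith [hdiag i]
  set s : Fin I → ℝ := fun i => Real.sqrt (1 - H i i) with hs
  have hspos : ∀ i, 0 < s i := fun i => Real.sqrt_pos.mpr (hpos i)
  have hssq : ∀ i, s i ^ 2 = 1 - H i i := fun i => Real.sq_sqrt (hpos i).le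
  set m : Fin I → ℝ := fun i => ((t1 i + t2 i)/2) / s i with hm
  set c : Fin I → ℝ := fun i => ((t1 i - t2 i)/2) / s i with hc
  set δ : Fin I → Ω → ℝ := fun i ω => 2 * ε i ω - 1 with hδ
  set C : ℝ := ((I : ℝ) ^ 2)⁻¹ with hC
  set M : Matrix (Fin I) (Fin I) ℝ := 1 - H with hM
  have hδmeas : ∀ i, Measurable (δ i) :=
    fun i => ((hεmeas i).const_mul 2).sub measurable_const
  have hδval : ∀ i ω, δ i ω = -1 ∨ δ i ω = 1 := by
    intro i ω; rcases hεval i ω with h | h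
    · left; simp [hδ, h]
    · right; simp [hδ, h]; norm_num
  have hδsq : ∀ i ω, δ i ω * δ i ω = 1 := by
    intro i ω; rcases hδval i ω with h | h <;> rw [h] <;> ring
  have hδbd : ∀ i ω, ‖δ i ω‖ ≤ 1 := by
    intro i ω; rcases hδval i ω with h | h <;> simp [h]
  have hδint : ∀ i, Integrable (δ i) P := by
    intro i
    exact (memLp_top_of_bound (hδmeas i).aestronglyMeasurable 1
      (Filter.Eventually.of_forall (hδbd i))).integrable le_top
  have hδδint : ∀ i j, Integrable (fun ω => δ i ω * δ j ω) P := by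
    intro i j
    refine (memLp_top_of_bound ((hδmeas i).mul (hδmeas j)).aestronglyMeasurable 1
      (Filter.Eventually.of_forall ?_)).integrable le_top
    intro ω
    rw [Pi.mul_apply, norm_mul]
    calc ‖δ i ω‖ * ‖δ j ω‖ ≤ 1 * 1 := by
          exact mul_le_mul (hδbd i ω) (hδbd j ω) (norm_nonneg _) zero_le_one
      _ = 1 := by ring
  have hεeq : ∀ i, ε i = Set.indicator ((ε i) ⁻¹' {1}) (fun _ => (1:ℝ)) := by
    intro i; funext ω
    rcases hεval i ω with h | h
    · rw [h, Set.indicator_of_notMem]; simp [Set.mem_preimage, h]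
    · rw [h, Set.indicator_of_mem]; simp [Set.mem_preimage, h]
  have hεint : ∀ i, Integrable (ε i) P := by
    intro i
    rw [hεeq i]
    exact (integrable_const (1:ℝ)).indicator ((hεmeas i) (measurableSet_singleton 1))
  have hEε : ∀ i, ∫ ω, ε i ω ∂P = 1/2 := by
    intro i
    rw [show (fun ω => ε i ω) = ε i from rfl, hεeq i,
      integral_indicator_const (1:ℝ) ((hεmeas i) (measurableSet_singleton 1))]
    have : (ε i) ⁻¹' {1} = {ω | ε i ω = 1} := by ext ω; simp
    rw [this, measureReal_def, hε1 i]
    simp [ENNReal.toReal_div]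
  have hEδ : ∀ i, ∫ ω, δ i ω ∂P = 0 := by
    intro i
    have : ∫ ω, δ i ω ∂P = ∫ ω, (2 * ε i ω - 1) ∂P := rfl
    rw [this, integral_sub ((hεint i).const_mul 2) (integrable_const 1),
      integral_const_mul, hEε i, integral_const]
    simp
  have hEδδ : ∀ i j, i ≠ j → ∫ ω, δ i ω * δ j ω ∂P = 0 := by
    intro i j hij
    have hind : IndepFun (δ i) (δ j) P := by
      have h1 : IndepFun (ε i) (ε j) P := hindep.indepFun hij
      exact h1.comp (measurable_const_mul 2 |>.sub measurable_const)
        (measurable_const_mul 2 |>.sub measurable_const)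
    have := hind.integral_mul_eq_mul_integral (hδint i).aestronglyMeasurable (hδint j).aestronglyMeasurable
    rw [show (δ i * δ j) = fun ω => δ i ω * δ j ω from rfl] at this
    rw [this, hEδ i, hEδ j]; ring
  -- decomposition of f
  have hf : ∀ i ω, (ε i ω * t1 i + (1 - ε i ω) * t2 i) / s i = m i + c i * δ i ω := by
    intro i ω
    rw [hm, hc, hδ]
    field_simp
    ring
  -- expectation of products
  have hEff : ∀ i j, ∫ ω, (m i + c i * δ i ω) * (m j + c j * δ j ω) ∂P
      = m i * m j + (if i = j then c i * c j else 0) := by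
    intro i j
    have hexp : (fun ω => (m i + c i * δ i ω) * (m j + c j * δ j ω))
        = fun ω => (m i * m j + (m i * c j) * δ j ω)
          + ((c i * m j) * δ i ω + (c i * c j) * (δ i ω * δ j ω)) := by
      funext ω; ring
    have I1 : Integrable (fun _ : Ω => m i * m j) P := integrable_const _
    have I2 : Integrable (fun ω => (m i * c j) * δ j ω) P := (hδint j).const_mul (m i * c j)
    have I3 : Integrable (fun ω => (c i * m j) * δ i ω) P := (hδint i).const_mul (c i * m j)
    have I4 : Integrable (fun ω => (c i * c j) * (δ i ω * δ j ω)) P :=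
      (hδδint i j).const_mul (c i * c j)
    have I12 : Integrable (fun ω => m i * m j + (m i * c j) * δ j ω) P := I1.add I2
    have I34 : Integrable (fun ω => (c i * m j) * δ i ω + (c i * c j) * (δ i ω * δ j ω)) P :=
      I3.add I4
    rw [show (∫ ω, (m i + c i * δ i ω) * (m j + c j * δ j ω) ∂P)
        = ∫ ω, ((m i * m j + (m i * c j) * δ j ω)
          + ((c i * m j) * δ i ω + (c i * c j) * (δ i ω * δ j ω))) ∂P from by rw [← hexp],
      integral_add I12 I34, integral_add I1 I2, integral_add I3 I4,
      integral_const, integral_const_mul, integral_const_mul, integral_const_mul,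
      hEδ i, hEδ j]
    by_cases h : i = j
    · subst h
      have h1 : ∫ ω, δ i ω * δ i ω ∂P = 1 := by
        rw [show (fun ω => δ i ω * δ i ω) = fun _ => (1:ℝ) from funext (hδsq i)]
        simp
      rw [h1]; simp
    · rw [hEδδ i j h]; simp [h]
  -- integrability of the summands
  have hsumint : ∀ (i j : Fin I), Integrable
      (fun ω => C * (M i j * ((m i + c i * δ i ω) * (m j + c j * δ j ω)))) P := by
    intro i j
    have hexp : (fun ω => (m i + c i * δ i ω) * (m j + c j * δ j ω))
        = fun ω => (m i * m j + (m i * c j) * δ j ω)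
          + ((c i * m j) * δ i ω + (c i * c j) * (δ i ω * δ j ω)) := by
      funext ω; ring
    have : Integrable (fun ω => (m i + c i * δ i ω) * (m j + c j * δ j ω)) P := by
      rw [hexp]
      exact ((integrable_const _).add ((hδint j).const_mul _)).add
        (((hδint i).const_mul _).add ((hδδint i j).const_mul _))
    exact (this.const_mul _).const_mul _
  -- rewrite integrand as double sum
  have hbig : (fun ω => C *
        ((fun i => (ε i ω * t1 i + (1 - ε i ω) * t2 i) / s i) ⬝ᵥ
          (M *ᵥ fun i => (ε i ω * t1 i + (1 - ε i ω) * t2 i) / s i)))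
      = fun ω => ∑ i : Fin I, ∑ j : Fin I,
          C * (M i j * ((m i + c i * δ i ω) * (m j + c j * δ j ω))) := by
    funext ω
    simp only [dotProduct, mulVec, hf, Finset.mul_sum]
    refine Finset.sum_congr rfl fun i _ => ?_
    refine Finset.sum_congr rfl fun j _ => ?_
    ring
  calc (∫ ω, C * ((fun i => (ε i ω * t1 i + (1 - ε i ω) * t2 i) / s i) ⬝ᵥ
          (M *ᵥ fun i => (ε i ω * t1 i + (1 - ε i ω) * t2 i) / s i)) ∂P)
      = ∫ ω, ∑ i : Fin I, ∑ j : Fin I,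
          C * (M i j * ((m i + c i * δ i ω) * (m j + c j * δ j ω))) ∂P := by rw [hbig]
    _ = ∑ i : Fin I, ∑ j : Fin I,
          C * (M i j * (m i * m j + (if i = j then c i * c j else 0))) := by
        rw [integral_finset_sum _ (fun i _ => integrable_finset_sum _ (fun j _ => hsumint i j))]
        refine Finset.sum_congr rfl fun i _ => ?_
        rw [integral_finset_sum _ (fun j _ => hsumint i j)]
        refine Finset.sum_congr rfl fun j _ => ?_
        rw [integral_const_mul, integral_const_mul, hEff i j]
    _ = C * (∑ i : Fin I, (t1 i - t2 i) ^ 2 / 4)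
        + C * ((fun i => ((t1 i + t2 i) / 2) / s i) ⬝ᵥ
            (M *ᵥ fun i => ((t1 i + t2 i) / 2) / s i)) := by
        simp only [dotProduct, mulVec, Finset.mul_sum, mul_add, Finset.sum_add_distrib]
        rw [add_comm]
        congr 1
        · -- diag part
          refine Finset.sum_congr rfl fun i _ => ?_
          rw [Finset.sum_eq_single i]
          · have hMii : M i i = 1 - H i i := by simp [hM, Matrix.sub_apply, Matrix.one_apply]
            have hcc : c i * c i * (1 - H i i) = (t1 i - t2 i)^2/4 := by
              rw [hc, ← hssq i]
              field_simp [ (hspos i).ne' ]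
              ring
            rw [if_pos rfl, hMii, ← hcc]
            ring
          · intro j _ hji; simp [Ne.symm hji]
          · intro h; exact absurd (Finset.mem_univ i) h
        · refine Finset.sum_congr rfl fun i _ => ?_
          refine Finset.sum_congr rfl fun j _ => ?_
          rw [hm]; ring
end

section
/- In the matched-pair DID setup with ε_1,…,ε_I mutually independent and P(ε_i = 1) = P(ε_i = 0) = 1/2 for every i, the variance estimator is conservative in expectation: E[S²(Q)] ≥ Var(τ̂). In particular, since Var(τ̂) = I⁻² Σ_{i=1}^I ν_i², one has E[S²(Q)] ≥ I⁻² Σ_{i=1}^I ν_i². -/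
open MeasureTheory ProbabilityTheory Finset Matrix

/-- **Conservativeness of the variance estimator `S²(Q)`.**
In the matched-pair DID setup with `I ≥ 1` pairs, pair-level potential estimator
values `t1 i, t2 i`, and mutually independent assignments `ε i ∈ {0,1}` with
`P(ε i = 1) = P(ε i = 0) = 1/2`, let `Q` be an `I × L` matrix (`L < I`) with `QᵀQ`
invertible, `H = Q (QᵀQ)⁻¹ Qᵀ` with diagonal entries `H i i < 1`,
`y i = τ̂ i / √(1 - H i i)` and `S²(Q) = I⁻² yᵀ (Id - H) y`, where
`τ̂ i = ε i * t1 i + (1 - ε i) * t2 i` and `τ̂ = (1/I) ∑ i, τ̂ i`.  Then the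
variance estimator is conservative in expectation: `E[S²(Q)] ≥ Var(τ̂)`; in
particular `E[S²(Q)] ≥ I⁻² ∑ i, ν i²` where `ν i² = (t1 i - t2 i)²/4`. -/
theorem variance_estimator_conservative
    {Ω : Type*} [MeasurableSpace Ω] (P : Measure Ω) [IsProbabilityMeasure P]
    (I L : ℕ) (hI : 1 ≤ I) (hL : L < I)
    (t1 t2 : Fin I → ℝ)
    (ε : Fin I → Ω → ℝ)
    (hεmeas : ∀ i, Measurable (ε i))
    (hεval : ∀ i ω, ε i ω = 0 ∨ ε i ω = 1)
    (hindep : iIndepFun ε P)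
    (hε1 : ∀ i, P {ω | ε i ω = 1} = 1 / 2)
    (hε0 : ∀ i, P {ω | ε i ω = 0} = 1 / 2)
    (Q : Matrix (Fin I) (Fin L) ℝ) (hQ : IsUnit (Qᵀ * Q))
    (H : Matrix (Fin I) (Fin I) ℝ) (hH : H = Q * (Qᵀ * Q)⁻¹ * Qᵀ)
    (hdiag : ∀ i, H i i < 1) :
    (∫ ω, ((I : ℝ) ^ 2)⁻¹ *
        ((fun i => (ε i ω * t1 i + (1 - ε i ω) * t2 i) / Real.sqrt (1 - H i i)) ⬝ᵥ
          ((1 - H) *ᵥ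
            fun i => (ε i ω * t1 i + (1 - ε i ω) * t2 i) / Real.sqrt (1 - H i i))) ∂P)
      ≥ variance (fun ω => (I : ℝ)⁻¹ * ∑ i : Fin I,
          (ε i ω * t1 i + (1 - ε i ω) * t2 i)) P
    ∧ (∫ ω, ((I : ℝ) ^ 2)⁻¹ *
        ((fun i => (ε i ω * t1 i + (1 - ε i ω) * t2 i) / Real.sqrt (1 - H i i)) ⬝ᵥ
          ((1 - H) *ᵥ
            fun i => (ε i ω * t1 i + (1 - ε i ω) * t2 i) / Real.sqrt (1 - H i i))) ∂P)
      ≥ ((I : ℝ) ^ 2)⁻¹ * ∑ i : Fin I, (t1 i - t2 i) ^ 2 / 4 := by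
  classical
  -- basic abbreviations
  set τ : Fin I → Ω → ℝ := fun i ω => ε i ω * t1 i + (1 - ε i ω) * t2 i with hτdef
  set s : Fin I → ℝ := fun i => Real.sqrt (1 - H i i) with hsdef
  set m : Fin I → ℝ := fun i => ((t1 i + t2 i) / 2) / s i with hmdef
  have hpos : ∀ i, (0:ℝ) < 1 - H i i := fun i => by linarith [hdiag i]
  have hspos : ∀ i, 0 < s i := fun i => Real.sqrt_pos.mpr (hpos i)
  have hs2 : ∀ i, s i ^ 2 = 1 - H i i := fun i => Real.sq_sqrt (le_of_lt (hpos i))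
  -- measurability and integrability
  have hτmeas : ∀ i, Measurable (τ i) := fun i =>
    ((hεmeas i).mul_const _).add ((measurable_const.sub (hεmeas i)).mul_const _)
  have hτval : ∀ i ω, τ i ω = t2 i ∨ τ i ω = t1 i := by
    intro i ω
    rcases hεval i ω with h | h
    · left; simp [hτdef, h]
    · right; simp [hτdef, h]
  have hτbd : ∀ i ω, ‖τ i ω‖ ≤ |t1 i| + |t2 i| := by
    intro i ω
    rcases hτval i ω with h | h <;> rw [h, Real.norm_eq_abs]
    · exact le_add_of_nonneg_left (abs_nonneg _)
    · exact le_add_of_nonneg_right (abs_nonneg _)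
  have hτL2 : ∀ i, MemLp (τ i) 2 P := fun i =>
    MemLp.of_bound (hτmeas i).aestronglyMeasurable _ (ae_of_all _ (hτbd i))
  have hτInt : ∀ i, Integrable (τ i) P := fun i => (hτL2 i).integrable one_le_two
  have hεInt : ∀ i, Integrable (ε i) P := by
    intro i
    refine memLp_one_iff_integrable.mp
      (MemLp.of_bound (hεmeas i).aestronglyMeasurable 1 (ae_of_all _ fun ω => ?_))
    rcases hεval i ω with h | h <;> simp [h]
  have hint2 : ∀ i j, Integrable (fun ω => τ i ω * τ j ω) P := by
    intro i j
    refine memLp_one_iff_integrable.mp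
      (MemLp.of_bound (((hτmeas i).mul (hτmeas j)).aestronglyMeasurable)
        ((|t1 i| + |t2 i|) * (|t1 j| + |t2 j|)) (ae_of_all _ fun ω => ?_))
    rw [Real.norm_eq_abs, abs_mul]
    exact mul_le_mul (hτbd i ω) (hτbd j ω) (abs_nonneg _)
      (le_trans (abs_nonneg _) (hτbd i ω))
  have hyeq : ∀ i j, (fun ω => (τ i ω / s i) * (τ j ω / s j))
      = fun ω => ((s i)⁻¹ * (s j)⁻¹) * (τ i ω * τ j ω) := by
    intro i j; funext ω; ring
  have hintyy : ∀ i j, Integrable (fun ω => (τ i ω / s i) * (τ j ω / s j)) P := by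
    intro i j; rw [hyeq]; exact (hint2 i j).const_mul _
  -- expectation of ε
  have hεint : ∀ i, ∫ ω, ε i ω ∂P = 1 / 2 := by
    intro i
    have hset : MeasurableSet {ω | ε i ω = 1} := hεmeas i (measurableSet_singleton 1)
    have heq : ∀ ω, ε i ω = Set.indicator {ω | ε i ω = 1} (fun _ => (1:ℝ)) ω := by
      intro ω
      rcases hεval i ω with h | h
      · rw [h, Set.indicator_of_notMem]; simp [h]
      · rw [h, Set.indicator_of_mem]; exact h
    calc ∫ ω, ε i ω ∂P = ∫ ω, Set.indicator {ω | ε i ω = 1} (fun _ => (1:ℝ)) ω ∂P :=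
          integral_congr_ae (ae_of_all _ heq)
      _ = (P {ω | ε i ω = 1}).toReal • (1:ℝ) := integral_indicator_const _ hset
      _ = 1 / 2 := by rw [hε1 i]; simp [ENNReal.toReal_div]
  -- expectation of τ i
  have hτint : ∀ i, ∫ ω, τ i ω ∂P = (t1 i + t2 i) / 2 := by
    intro i
    have h1 : (fun ω => τ i ω) = fun ω => (t1 i - t2 i) * ε i ω + t2 i := by
      funext ω; simp only [hτdef]; ring
    rw [h1, integral_add ((hεInt i).const_mul _) (integrable_const _),
      integral_const_mul, hεint i, integral_const]
    simp [measure_univ]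
    ring
  -- expectation of τ i ^ 2
  have hτsq : ∀ i, ∫ ω, τ i ω ^ 2 ∂P = ((t1 i + t2 i) / 2) ^ 2 + (t1 i - t2 i) ^ 2 / 4 := by
    intro i
    have h1 : (fun ω => τ i ω ^ 2) = fun ω => (t1 i ^ 2 - t2 i ^ 2) * ε i ω + t2 i ^ 2 := by
      funext ω
      rcases hεval i ω with h | h <;> simp only [hτdef, h] <;> ring
    rw [h1, integral_add ((hεInt i).const_mul _) (integrable_const _),
      integral_const_mul, hεint i, integral_const]
    simp [measure_univ]
    ring
  -- cross expectation via independence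
  have hcross : ∀ i j, i ≠ j →
      ∫ ω, τ i ω * τ j ω ∂P = ((t1 i + t2 i) / 2) * ((t1 j + t2 j) / 2) := by
    intro i j hij
    have hφ : ∀ k : Fin I, Measurable (fun x : ℝ => x * t1 k + (1 - x) * t2 k) := fun k =>
      (measurable_id.mul_const _).add ((measurable_const.sub measurable_id).mul_const _)
    have hind : IndepFun (τ i) (τ j) P :=
      (hindep.indepFun hij).comp (hφ i) (hφ j)
    have h := hind.integral_fun_mul_eq_mul_integral (hτInt i).aestronglyMeasurable
      (hτInt j).aestronglyMeasurable
    rw [hτint i, hτint j] at h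
    exact h
  -- expectation of y i * y j
  have hyint : ∀ i j, ∫ ω, (τ i ω / s i) * (τ j ω / s j) ∂P
      = m i * m j + (if i = j then (t1 i - t2 i) ^ 2 / 4 / (1 - H i i) else 0) := by
    intro i j
    rw [hyeq, integral_const_mul]
    rcases eq_or_ne i j with rfl | hij
    · have : ∫ ω, τ i ω * τ i ω ∂P = ((t1 i + t2 i) / 2) ^ 2 + (t1 i - t2 i) ^ 2 / 4 := by
        rw [← hτsq i]; congr 1; funext ω; ring
      rw [this]
      simp only [if_pos rfl, ↓reduceIte, hmdef]
      have h1 : s i ≠ 0 := ne_of_gt (hspos i)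
      have h2 : (1 : ℝ) - H i i ≠ 0 := ne_of_gt (hpos i)
      field_simp
      rw [← hs2 i]
      ring
    · rw [hcross i j hij]
      simp only [if_neg hij, hmdef, add_zero]
      field_simp
  -- projection facts
  have hdet : IsUnit (Qᵀ * Q).det := (Matrix.isUnit_iff_isUnit_det _).mp hQ
  have hinv : (Qᵀ * Q)⁻¹ * (Qᵀ * Q) = 1 := Matrix.nonsing_inv_mul _ hdet
  have hproj : (1 - H) * (1 - H) = 1 - H := by
    have hHH : H * H = H := by
      calc H * H = Q * ((Qᵀ * Q)⁻¹ * (Qᵀ * Q)) * ((Qᵀ * Q)⁻¹ * Qᵀ) := by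
            rw [hH]; simp only [Matrix.mul_assoc]
        _ = H := by rw [hinv, Matrix.mul_one, hH, Matrix.mul_assoc]
    rw [Matrix.sub_mul, Matrix.mul_sub, Matrix.mul_sub, hHH]
    simp [Matrix.one_mul, Matrix.mul_one]
  have hsymm : (1 - H)ᵀ = 1 - H := by
    have : Hᵀ = H := by
      rw [hH]
      rw [Matrix.transpose_mul, Matrix.transpose_mul, Matrix.transpose_nonsing_inv,
        Matrix.transpose_mul, Matrix.transpose_transpose, Matrix.mul_assoc]
    rw [Matrix.transpose_sub, Matrix.transpose_one, this]
  -- quadratic form nonnegative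
  have hquad : 0 ≤ m ⬝ᵥ ((1 - H) *ᵥ m) := by
    have key : m ⬝ᵥ ((1 - H) *ᵥ m) = ((1 - H) *ᵥ m) ⬝ᵥ ((1 - H) *ᵥ m) := by
      conv_lhs => rw [← hproj, ← Matrix.mulVec_mulVec, dotProduct_mulVec]
      congr 1
      rw [← Matrix.vecMul_transpose, hsymm]
    rw [key]
    exact Finset.sum_nonneg fun i _ => mul_self_nonneg _
  -- compute the expectation of S²
  have hSint : (∫ ω, ((I : ℝ) ^ 2)⁻¹ *
        ((fun i => (ε i ω * t1 i + (1 - ε i ω) * t2 i) / Real.sqrt (1 - H i i)) ⬝ᵥ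
          ((1 - H) *ᵥ
            fun i => (ε i ω * t1 i + (1 - ε i ω) * t2 i) / Real.sqrt (1 - H i i))) ∂P)
      = ((I : ℝ) ^ 2)⁻¹ *
        (m ⬝ᵥ ((1 - H) *ᵥ m) + ∑ i : Fin I, (t1 i - t2 i) ^ 2 / 4) := by
    have hexp : ∀ ω, ((fun i => (ε i ω * t1 i + (1 - ε i ω) * t2 i) / Real.sqrt (1 - H i i)) ⬝ᵥ
          ((1 - H) *ᵥ
            fun i => (ε i ω * t1 i + (1 - ε i ω) * t2 i) / Real.sqrt (1 - H i i)))
        = ∑ i : Fin I, ∑ j : Fin I, (1 - H) i j * ((τ i ω / s i) * (τ j ω / s j)) := by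
      intro ω
      simp only [dotProduct, Matrix.mulVec, Finset.mul_sum]
      refine Finset.sum_congr rfl fun i _ => Finset.sum_congr rfl fun j _ => ?_
      simp only [hτdef, hsdef]
      ring
    simp_rw [hexp]
    rw [integral_const_mul,
      integral_finset_sum _ (f := fun i a => ∑ j : Fin I, (1 - H) i j * ((τ i a / s i) * (τ j a / s j)))
        (fun i _ => integrable_finset_sum _
        (fun j _ => (hintyy i j).const_mul _))]
    congr 1
    have : ∀ i : Fin I, ∫ ω, ∑ j : Fin I, (1 - H) i j * ((τ i ω / s i) * (τ j ω / s j)) ∂P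
        = ∑ j : Fin I, (1 - H) i j * (m i * m j +
            (if i = j then (t1 i - t2 i) ^ 2 / 4 / (1 - H i i) else 0)) := by
      intro i
      rw [integral_finset_sum _ (fun j _ => (hintyy i j).const_mul _)]
      refine Finset.sum_congr rfl fun j _ => ?_
      rw [integral_const_mul, hyint i j]
    simp_rw [this, mul_add, Finset.sum_add_distrib]
    congr 1
    · rw [dotProduct, Finset.sum_congr rfl]
      intro i _
      rw [Matrix.mulVec, dotProduct, Finset.mul_sum]
      refine Finset.sum_congr rfl fun j _ => ?_
      ring
    · refine Finset.sum_congr rfl fun i _ => ?_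
      rw [Finset.sum_eq_single i]
      · have h1 : (1 - H) i i = 1 - H i i := by
          simp [Matrix.sub_apply, Matrix.one_apply_eq]
        have h2 : (1:ℝ) - H i i ≠ 0 := ne_of_gt (hpos i)
        rw [if_pos rfl, h1, mul_comm, div_mul_cancel₀ _ h2]
      · intro j _ hji
        rw [if_neg (Ne.symm hji), mul_zero]
      · intro h; exact absurd (Finset.mem_univ i) h
  -- variance computation
  have hτvar : ∀ i, variance (τ i) P = (t1 i - t2 i) ^ 2 / 4 := by
    intro i
    rw [variance_eq_sub (hτL2 i)]
    have h2 : ∫ ω, (τ i ^ 2) ω ∂P = ((t1 i + t2 i) / 2) ^ 2 + (t1 i - t2 i) ^ 2 / 4 := by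
      rw [← hτsq i]; congr 1
    rw [h2, hτint i]
    ring
  have hpair : Set.Pairwise ↑(Finset.univ : Finset (Fin I))
      (fun i j => IndepFun (τ i) (τ j) P) := by
    intro i _ j _ hij
    have hφ : ∀ k : Fin I, Measurable (fun x : ℝ => x * t1 k + (1 - x) * t2 k) := fun k =>
      (measurable_id.mul_const _).add ((measurable_const.sub measurable_id).mul_const _)
    exact (hindep.indepFun hij).comp (hφ i) (hφ j)
  have hvar : variance (fun ω => (I : ℝ)⁻¹ * ∑ i : Fin I,
        (ε i ω * t1 i + (1 - ε i ω) * t2 i)) P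
      = ((I : ℝ) ^ 2)⁻¹ * ∑ i : Fin I, (t1 i - t2 i) ^ 2 / 4 := by
    have h1 : (fun ω => (I : ℝ)⁻¹ * ∑ i : Fin I, (ε i ω * t1 i + (1 - ε i ω) * t2 i))
        = fun ω => (I : ℝ)⁻¹ * (∑ i : Fin I, τ i) ω := by
      funext ω; simp [hτdef, Finset.sum_apply]
    rw [h1, variance_const_mul, IndepFun.variance_sum (fun i _ => hτL2 i) hpair]
    simp_rw [hτvar]
    rw [← inv_pow]
  -- conclude
  have hmain : (∫ ω, ((I : ℝ) ^ 2)⁻¹ *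
        ((fun i => (ε i ω * t1 i + (1 - ε i ω) * t2 i) / Real.sqrt (1 - H i i)) ⬝ᵥ
          ((1 - H) *ᵥ
            fun i => (ε i ω * t1 i + (1 - ε i ω) * t2 i) / Real.sqrt (1 - H i i))) ∂P)
      ≥ ((I : ℝ) ^ 2)⁻¹ * ∑ i : Fin I, (t1 i - t2 i) ^ 2 / 4 := by
    rw [hSint]
    have hI2 : (0:ℝ) ≤ ((I : ℝ) ^ 2)⁻¹ := by positivity
    have := mul_le_mul_of_nonneg_left
      (le_add_of_nonneg_left (a := ∑ i : Fin I, (t1 i - t2 i) ^ 2 / 4) hquad) hI2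
    exact this
  exact ⟨by rw [hvar]; exact hmain, hmain⟩
end

section
/- Let L ≥ 1 be fixed and, for each I, let Q_I be an I × L real matrix whose entries are uniformly bounded by a constant C, with (1/I) Q_Iᵀ Q_I converging entrywise to an invertible L × L matrix Q̃, and let μ_{I,1},…,μ_{I,I} be real numbers such that (1/I) Σ_{i=1}^I μ_{I,i}² converges to a finite limit p and, for each l = 1,…,L, (1/I) Σ_{i=1}^I μ_{I,i} (Q_I)_{il} converges to a limit a_l. Then (1/I) μ_Iᵀ (Id − H_{Q_I}) μ_I converges as I → ∞ to p − aᵀ Q̃⁻¹ a, where μ_I = (μ_{I,1},…,μ_{I,I})ᵀ, H_{Q_I} = Q_I (Q_IᵀQ_I)⁻¹ Q_Iᵀ (defined for all sufficiently large I), and a = (a_1,…,a_L)ᵀ; moreover this limit satisfies p − aᵀ Q̃⁻¹ a ≥ 0. -/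
open Filter Matrix Finset

lemma smul_inv_of_ne {n : Type*} [Fintype n] [DecidableEq n]
    (hcard : 1 ≤ Fintype.card n) (k : ℝ) (hk : k ≠ 0) (A : Matrix n n ℝ) :
    (k • A)⁻¹ = k⁻¹ • A⁻¹ := by
  rw [Matrix.inv_def, Matrix.inv_def, Matrix.adjugate_smul, Matrix.det_smul,
    smul_smul, smul_smul, Ring.inverse_eq_inv']
  congr 1
  have hpow : k ^ Fintype.card n = k ^ (Fintype.card n - 1) * k := by
    rw [← pow_succ, Nat.sub_add_cancel hcard]
  rcases eq_or_ne A.det 0 with hd0 | hd0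
  · simp [hd0]
  · field_simp
    rw [hpow]

/-- **Limit of the quadratic form `I⁻¹ μᵀ (Id − H_Q) μ`.**
Fix `L ≥ 1` and, for each `I`, let `Q I` be an `I × L` real matrix with entries
uniformly bounded by `C`, with `(1/I) (Q I)ᵀ (Q I)` converging entrywise to an
invertible matrix `Q̃`.  Let `μ I : Fin I → ℝ` satisfy `(1/I) ∑ i, (μ I i)² → p`
and, for each `l`, `(1/I) ∑ i, μ I i * Q I i l → a l`.  Then, with
`H_I = Q I ((Q I)ᵀ Q I)⁻¹ (Q I)ᵀ`, the quadratic form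
`(1/I) μ_Iᵀ (Id − H_I) μ_I` converges to `p − aᵀ Q̃⁻¹ a`, and this limit is `≥ 0`. -/
theorem quadratic_form_limit
    (L : ℕ) (hL : 1 ≤ L)
    (Q : (I : ℕ) → Matrix (Fin I) (Fin L) ℝ)
    (C : ℝ) (hC : ∀ I (i : Fin I) (l : Fin L), |Q I i l| ≤ C)
    (Qt : Matrix (Fin L) (Fin L) ℝ) (hQt : IsUnit Qt)
    (hconv : ∀ l l' : Fin L,
      Tendsto (fun I : ℕ => (I : ℝ)⁻¹ * ((Q I)ᵀ * Q I) l l') atTop (nhds (Qt l l')))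
    (μ : (I : ℕ) → Fin I → ℝ) (p : ℝ)
    (hp : Tendsto (fun I : ℕ => (I : ℝ)⁻¹ * ∑ i : Fin I, (μ I i) ^ 2) atTop (nhds p))
    (a : Fin L → ℝ)
    (ha : ∀ l : Fin L,
      Tendsto (fun I : ℕ => (I : ℝ)⁻¹ * ∑ i : Fin I, μ I i * Q I i l) atTop (nhds (a l))) :
    Tendsto
      (fun I : ℕ => (I : ℝ)⁻¹ *
        (μ I ⬝ᵥ ((1 - Q I * ((Q I)ᵀ * Q I)⁻¹ * (Q I)ᵀ) *ᵥ μ I)))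
      atTop (nhds (p - a ⬝ᵥ (Qt⁻¹ *ᵥ a)))
    ∧ 0 ≤ p - a ⬝ᵥ (Qt⁻¹ *ᵥ a) := by
  classical
  set S : ℕ → Matrix (Fin L) (Fin L) ℝ := fun I => (I : ℝ)⁻¹ • ((Q I)ᵀ * Q I) with hSdef
  set v : ℕ → Fin L → ℝ := fun I l => (I : ℝ)⁻¹ * ∑ i : Fin I, μ I i * Q I i l with hvdef
  have hcard : 1 ≤ Fintype.card (Fin L) := by simpa using hL
  -- convergence of S to Qt
  have hS : Tendsto S atTop (nhds Qt) := by
    apply tendsto_pi_nhds.mpr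
    intro l
    rw [tendsto_pi_nhds]
    intro l'
    simpa [hSdef, Matrix.smul_apply, smul_eq_mul] using hconv l l'
  -- determinant facts
  have hdne : Qt.det ≠ 0 := by
    have := (Matrix.isUnit_iff_isUnit_det Qt).mp hQt
    exact this.ne_zero
  have hdet : Tendsto (fun I => (S I).det) atTop (nhds Qt.det) :=
    ((continuous_id.matrix_det).tendsto Qt).comp hS
  -- convergence of inverses
  have hinvC : ContinuousAt Inv.inv Qt := by
    apply continuousAt_matrix_inv
    rw [Ring.inverse_eq_inv']
    exact continuousAt_inv₀ hdne
  have hinv : Tendsto (fun I => (S I)⁻¹) atTop (nhds Qt⁻¹) := hinvC.tendsto.comp hS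
  have hinvE : ∀ l l' : Fin L,
      Tendsto (fun I => (S I)⁻¹ l l') atTop (nhds (Qt⁻¹ l l')) := by
    intro l l'
    exact tendsto_pi_nhds.mp (tendsto_pi_nhds.mp hinv l) l'
  -- the auxiliary limit
  have hmain : Tendsto (fun I => v I ⬝ᵥ ((S I)⁻¹ *ᵥ v I)) atTop
      (nhds (a ⬝ᵥ (Qt⁻¹ *ᵥ a))) := by
    simp only [dotProduct, mulVec]
    apply tendsto_finset_sum
    intro l _
    exact (ha l).mul (tendsto_finset_sum _ fun l' _ => (hinvE l l').mul (ha l'))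
  have hlim : Tendsto (fun I : ℕ => (I : ℝ)⁻¹ * ∑ i : Fin I, (μ I i) ^ 2
      - v I ⬝ᵥ ((S I)⁻¹ *ᵥ v I)) atTop (nhds (p - a ⬝ᵥ (Qt⁻¹ *ᵥ a))) := hp.sub hmain
  -- eventual facts
  have hevd : ∀ᶠ I : ℕ in atTop, (S I).det ≠ 0 := hdet.eventually_ne hdne
  have hev1 : ∀ᶠ I : ℕ in atTop, 1 ≤ I := eventually_ge_atTop 1
  -- algebra on the good set
  have key : ∀ I : ℕ, (S I).det ≠ 0 → 1 ≤ I →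
      ((I : ℝ)⁻¹ * (μ I ⬝ᵥ ((1 - Q I * ((Q I)ᵀ * Q I)⁻¹ * (Q I)ᵀ) *ᵥ μ I))
        = (I : ℝ)⁻¹ * ∑ i : Fin I, (μ I i) ^ 2 - v I ⬝ᵥ ((S I)⁻¹ *ᵥ v I))
      ∧ 0 ≤ (I : ℝ)⁻¹ * (μ I ⬝ᵥ ((1 - Q I * ((Q I)ᵀ * Q I)⁻¹ * (Q I)ᵀ) *ᵥ μ I)) := by
    intro I hd hI1
    have hIne : (I : ℝ) ≠ 0 := by positivity
    have hQQ : (Q I)ᵀ * Q I = (I : ℝ) • S I := by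
      simp [hSdef, smul_smul, mul_inv_cancel₀ hIne]
    have hQQinv : ((Q I)ᵀ * Q I)⁻¹ = (I : ℝ)⁻¹ • (S I)⁻¹ := by
      rw [hQQ, smul_inv_of_ne hcard _ hIne]
    set u : Fin L → ℝ := (Q I)ᵀ *ᵥ μ I with hudef
    have hvu : v I = (I : ℝ)⁻¹ • u := by
      funext l
      simp [hvdef, hudef, mulVec, dotProduct, Matrix.transpose_apply, mul_comm]
    have hquad : μ I ⬝ᵥ ((1 - Q I * ((Q I)ᵀ * Q I)⁻¹ * (Q I)ᵀ) *ᵥ μ I)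
        = μ I ⬝ᵥ μ I - (I : ℝ)⁻¹ * (u ⬝ᵥ ((S I)⁻¹ *ᵥ u)) := by
      rw [Matrix.sub_mulVec, dotProduct_sub, Matrix.one_mulVec]
      congr 1
      rw [hQQinv]
      have : (Q I * ((I : ℝ)⁻¹ • (S I)⁻¹) * (Q I)ᵀ) *ᵥ μ I
          = Q I *ᵥ (((I : ℝ)⁻¹ • (S I)⁻¹) *ᵥ u) := by
        rw [hudef, Matrix.mulVec_mulVec, Matrix.mulVec_mulVec]
      rw [this, Matrix.dotProduct_mulVec]
      have hμQ : μ I ᵥ* Q I = u := by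
        rw [hudef, ← Matrix.transpose_transpose (Q I), Matrix.vecMul_transpose,
          Matrix.transpose_transpose]
      rw [hμQ, Matrix.smul_mulVec, dotProduct_smul, smul_eq_mul]
    have hvSv : v I ⬝ᵥ ((S I)⁻¹ *ᵥ v I)
        = (I : ℝ)⁻¹ * ((I : ℝ)⁻¹ * (u ⬝ᵥ ((S I)⁻¹ *ᵥ u))) := by
      rw [hvu, Matrix.mulVec_smul, smul_dotProduct, dotProduct_smul,
        smul_eq_mul, smul_eq_mul]
    have hμμ : μ I ⬝ᵥ μ I = ∑ i : Fin I, (μ I i) ^ 2 := by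
      simp [dotProduct, sq]
    constructor
    · rw [hquad, hμμ, hvSv]; ring
    · -- nonnegativity
      have hdetQQ : IsUnit ((Q I)ᵀ * Q I).det := by
        rw [hQQ, Matrix.det_smul]
        exact (mul_ne_zero (pow_ne_zero _ hIne) hd).isUnit
      set M : Matrix (Fin L) (Fin L) ℝ := ((Q I)ᵀ * Q I)⁻¹ with hMdef
      set P : Matrix (Fin I) (Fin I) ℝ := 1 - Q I * M * (Q I)ᵀ with hPdef
      have hMsymm : Mᵀ = M := by
        rw [hMdef, Matrix.transpose_nonsing_inv, Matrix.transpose_mul,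
          Matrix.transpose_transpose]
      have hPsymm : Pᵀ = P := by
        rw [hPdef, Matrix.transpose_sub, Matrix.transpose_one, Matrix.transpose_mul,
          Matrix.transpose_mul, Matrix.transpose_transpose, hMsymm, Matrix.mul_assoc]
      have h1 : ((Q I)ᵀ * Q I) * M = 1 := Matrix.mul_nonsing_inv _ hdetQQ
      have keymul : (Q I)ᵀ * (Q I * (M * (Q I)ᵀ)) = (Q I)ᵀ := by
        calc (Q I)ᵀ * (Q I * (M * (Q I)ᵀ)) = ((Q I)ᵀ * Q I) * M * (Q I)ᵀ := by
              simp only [Matrix.mul_assoc]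
          _ = (Q I)ᵀ := by rw [h1, Matrix.one_mul]
      have hPP : P * P = P := by
        rw [hPdef]
        have hHH : Q I * M * (Q I)ᵀ * (Q I * M * (Q I)ᵀ) = Q I * M * (Q I)ᵀ := by
          calc Q I * M * (Q I)ᵀ * (Q I * M * (Q I)ᵀ)
              = Q I * (M * ((Q I)ᵀ * (Q I * (M * (Q I)ᵀ)))) := by
                simp only [Matrix.mul_assoc]
            _ = Q I * M * (Q I)ᵀ := by rw [keymul, Matrix.mul_assoc]
        simp only [Matrix.sub_mul, Matrix.mul_sub, Matrix.one_mul, Matrix.mul_one, hHH]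
        abel
      have hquadP : μ I ⬝ᵥ (P *ᵥ μ I) = (P *ᵥ μ I) ⬝ᵥ (P *ᵥ μ I) := by
        conv_lhs => rw [← hPP, ← Matrix.mulVec_mulVec, Matrix.dotProduct_mulVec]
        congr 1
        rw [← hPsymm, Matrix.vecMul_transpose, hPsymm]
      have h0 : 0 ≤ μ I ⬝ᵥ (P *ᵥ μ I) := by
        rw [hquadP]
        exact Finset.sum_nonneg fun i _ => mul_self_nonneg _
      have : (0:ℝ) ≤ (I : ℝ)⁻¹ := by positivity
      exact mul_nonneg this h0
  have heq : (fun I : ℕ => (I : ℝ)⁻¹ *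
        (μ I ⬝ᵥ ((1 - Q I * ((Q I)ᵀ * Q I)⁻¹ * (Q I)ᵀ) *ᵥ μ I)))
      =ᶠ[atTop] fun I => (I : ℝ)⁻¹ * ∑ i : Fin I, (μ I i) ^ 2
        - v I ⬝ᵥ ((S I)⁻¹ *ᵥ v I) := by
    filter_upwards [hevd, hev1] with I hd hI1
    exact (key I hd hI1).1
  have hT : Tendsto
      (fun I : ℕ => (I : ℝ)⁻¹ *
        (μ I ⬝ᵥ ((1 - Q I * ((Q I)ᵀ * Q I)⁻¹ * (Q I)ᵀ) *ᵥ μ I)))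
      atTop (nhds (p - a ⬝ᵥ (Qt⁻¹ *ᵥ a))) := hlim.congr' heq.symm
  refine ⟨hT, ?_⟩
  apply ge_of_tendsto hT
  filter_upwards [hevd, hev1] with I hd hI1
  exact (key I hd hI1).2
end
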